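/- For all push-pop StacKAT expressions e and f: ⟦e⟧ = ⟦f⟧ if and only if overline(L(e)) = overline(L(f)), where overline(L) := poppush(filter(pushpop(L))). -/

import Mathlib

/-- Push-pop StacKAT expressions: regular-expression terms over push/pop of values in `V`. -/
inductive Exp (V : Type) : Type
  | zero : Exp V
  | one : Exp V
  | plus : Exp V → Exp V → Exp V
  | seq : Exp V → Exp V → Exp V
  | star : Exp V → Exp V
  | push : V → Exp V
  | pop : V → Exp V

/-- `n`-fold relational composition of a relation. -/
def relPow {α : Type*} (r : α → α → Prop) : ℕ → α → α → Prop
  | 0 => Eq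
  | n + 1 => Relation.Comp r (relPow r n)

/-- The relational semantics of a push-pop StacKAT expression, as a binary relation on stacks. -/
def denote {V : Type} : Exp V → List V → List V → Prop
  | Exp.zero => fun _ _ => False
  | Exp.one => Eq
  | Exp.plus e f => fun s t => denote e s t ∨ denote f s t
  | Exp.seq e f => Relation.Comp (denote e) (denote f)
  | Exp.star e => fun s t => ∃ n, relPow (denote e) n s t
  | Exp.push v => fun s t => t = v :: s
  | Exp.pop v => fun s t => s = v :: t

/-- The push-pop alphabet `Σ = {push v, pop v | v ∈ V}`:
`Sum.inl v` is `push v`, `Sum.inr v` is `pop v`. -/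
abbrev Alph (V : Type) : Type := V ⊕ V

/-- The letter `push v`. -/
def pushSym {V : Type} (v : V) : Alph V := Sum.inl v

/-- The letter `pop v`. -/
def popSym {V : Type} (v : V) : Alph V := Sum.inr v

/-- `pushpop(L)`: the least language containing `L` closed under the rule
"if `x · push v · pop v · y ∈ pushpop(L)` then `x · y ∈ pushpop(L)`". -/
inductive PushPop {V : Type} (L : Language (Alph V)) : List (Alph V) → Prop
  | base {x : List (Alph V)} : x ∈ L → PushPop L x
  | step {x y : List (Alph V)} {v : V} :
      PushPop L (x ++ pushSym v :: popSym v :: y) → PushPop L (x ++ y)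

/-- `pushpop(L)` as a language. -/
def pushpopCl {V : Type} (L : Language (Alph V)) : Language (Alph V) := {x | PushPop L x}

/-- `L_{pop*push*}`: words in which no pop occurs after a push, i.e. a block of pops
followed by a block of pushes. -/
def PopsThenPushes {V : Type} : Language (Alph V) :=
  {w | ∃ p q : List V, w = p.map popSym ++ q.map pushSym}

/-- `filter(L) := L ∩ L_{pop*push*}`. -/
def filterL {V : Type} (L : Language (Alph V)) : Language (Alph V) :=
  {w | w ∈ L ∧ w ∈ PopsThenPushes}

/-- `poppush(L)`: the least language containing `L` closed under the rule
"if `x · y ∈ poppush(L)` with `x` all pops and `y` all pushes, then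
`x · pop v · push v · y ∈ poppush(L)` for every `v`". -/
inductive PopPush {V : Type} (L : Language (Alph V)) : List (Alph V) → Prop
  | base {x : List (Alph V)} : x ∈ L → PopPush L x
  | step {p q : List V} {v : V} :
      PopPush L (p.map popSym ++ q.map pushSym) →
      PopPush L (p.map popSym ++ popSym v :: pushSym v :: q.map pushSym)

/-- `poppush(L)` as a language. -/
def poppushCl {V : Type} (L : Language (Alph V)) : Language (Alph V) := {x | PopPush L x}

/-- The zipped alphabet: pairs whose first component is a pop symbol or `done` (`none`)
and whose second component is a push symbol or `done` (`none`). -/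
abbrev ZAlph (V : Type) : Type := Option V × Option V

/-- Zip together a list of pop values (innermost, i.e. last, pop first) with a list of
push values (first push first), padding with `done` (`none`). -/
def zipAux {V : Type} : List V → List V → List (ZAlph V)
  | [], [] => []
  | v :: p, [] => (some v, none) :: zipAux p []
  | [], w :: q => (none, some w) :: zipAux [] q
  | v :: p, w :: q => (some v, some w) :: zipAux p q

/-- Read off the maximal prefix of pop letters, returning the popped values in order
together with the remaining suffix. -/
def takePops {V : Type} : List (Alph V) → List V × List (Alph V)
  | Sum.inr v :: r => ((takePops r).1.cons v, (takePops r).2)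
  | w => ([], w)

/-- If the word consists only of push letters, return their values in order; else `none`. -/
def asPushes {V : Type} : List (Alph V) → Option (List V)
  | [] => some []
  | Sum.inl v :: r => (asPushes r).map (v :: ·)
  | Sum.inr _ :: _ => none

/-- `zip`: the partial function on `Σ*` defined only on words of the form pops-then-pushes,
pairing the last pop with the first push, and so on outwards, padding with `done`. -/
def zipWord {V : Type} (w : List (Alph V)) : Option (List (ZAlph V)) :=
  (asPushes (takePops w).2).map fun q => zipAux (takePops w).1.reverse q

/-- `zip(L) := { zip(x) | x ∈ L, zip(x) defined }`. -/
def zipLang {V : Type} (L : Language (Alph V)) : Language (ZAlph V) :=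
  {z | ∃ w ∈ L, zipWord w = some z}

/-- The regular language `L(e) ⊆ Σ*` of a push-pop expression viewed as a regular
expression over the push-pop alphabet. -/
def lang {V : Type} : Exp V → Language (Alph V)
  | Exp.zero => 0
  | Exp.one => 1
  | Exp.plus e f => lang e + lang f
  | Exp.seq e f => lang e * lang f
  | Exp.star e => KStar.kstar (lang e)
  | Exp.push v => {[pushSym v]}
  | Exp.pop v => {[popSym v]}

/-- The relation on stacks denoted by a single letter. -/
def letterRel {V : Type} : Alph V → List V → List V → Prop
  | Sum.inl v => fun s t => t = v :: s
  | Sum.inr v => fun s t => s = v :: t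

/-- The relation on stacks denoted by a word `x ∈ Σ*`: the composition of the letter
relations (`⟦ε⟧` is the identity). -/
def wordRel {V : Type} : List (Alph V) → List V → List V → Prop
  | [] => Eq
  | a :: x => Relation.Comp (letterRel a) (wordRel x)

/-- `[L] := ⋃_{x ∈ L} ⟦x⟧`: the relational interpretation of a language. -/
def langRel {V : Type} (L : Language (Alph V)) : List V → List V → Prop :=
  fun s t => ∃ x ∈ L, wordRel x s t

/-- `overline(L) := poppush(filter(pushpop(L)))`. -/
def overlineL {V : Type} (L : Language (Alph V)) : Language (Alph V) :=
  poppushCl (filterL (pushpopCl L))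

section Lemmas

variable {V : Type}

lemma wordRel_append (x y : List (Alph V)) (s t : List V) :
    wordRel (x ++ y) s t ↔ ∃ m, wordRel x s m ∧ wordRel y m t := by
  induction x generalizing s with
  | nil =>
    constructor
    · intro h; exact ⟨s, rfl, h⟩
    · rintro ⟨m, rfl, h⟩; exact h
  | cons a x ih =>
    simp only [List.cons_append, wordRel, Relation.Comp]
    constructor
    · rintro ⟨m, ha, h⟩
      obtain ⟨m2, h1, h2⟩ := (ih m).mp h
      exact ⟨m2, ⟨m, ha, h1⟩, h2⟩
    · rintro ⟨m2, ⟨m, ha, h1⟩, h2⟩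
      exact ⟨m, ha, (ih m).mpr ⟨m2, h1, h2⟩⟩

lemma wordRel_pops (p : List V) (s t : List V) :
    wordRel (p.map popSym) s t ↔ s = p ++ t := by
  induction p generalizing s with
  | nil =>
    constructor
    · intro h; exact h
    · intro h; exact h
  | cons v p ih =>
    simp only [List.map_cons, wordRel, Relation.Comp, letterRel, popSym]
    constructor
    · rintro ⟨m, hm, h⟩; rw [hm, (ih m).mp h]; rfl
    · rintro rfl; exact ⟨p ++ t, rfl, (ih _).mpr rfl⟩

lemma wordRel_pushes (q : List V) (s t : List V) :
    wordRel (q.map pushSym) s t ↔ t = q.reverse ++ s := by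
  induction q generalizing s with
  | nil =>
    constructor
    · intro h; exact h.symm
    · intro h; exact h.symm
  | cons v q ih =>
    simp only [List.map_cons, wordRel, Relation.Comp, letterRel, pushSym]
    constructor
    · rintro ⟨m, rfl, h⟩; rw [(ih _).mp h]; simp
    · rintro rfl; exact ⟨v :: s, rfl, by rw [ih]; simp⟩

lemma wordRel_canon (p q : List V) (s t : List V) :
    wordRel (p.map popSym ++ q.map pushSym) s t ↔ ∃ u, s = p ++ u ∧ t = q.reverse ++ u := by
  rw [wordRel_append]
  constructor
  · rintro ⟨m, h1, h2⟩
    exact ⟨m, (wordRel_pops ..).mp h1, (wordRel_pushes ..).mp h2⟩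
  · rintro ⟨u, rfl, rfl⟩
    exact ⟨u, (wordRel_pops ..).mpr rfl, (wordRel_pushes ..).mpr rfl⟩

lemma wordRel_suffix (u : List V) {x : List (Alph V)} {s t : List V} (h : wordRel x s t) :
    wordRel x (s ++ u) (t ++ u) := by
  induction x generalizing s with
  | nil => cases h; rfl
  | cons a x ih =>
    obtain ⟨m, ha, h⟩ := h
    refine ⟨m ++ u, ?_, ih h⟩
    cases a with
    | inl v =>
      simp only [letterRel] at ha ⊢
      rw [ha]; rfl
    | inr v =>
      simp only [letterRel] at ha ⊢
      rw [ha]; rfl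

lemma wordRel_cancel (a b : List (Alph V)) (v : V) (s t : List V) :
    wordRel (a ++ pushSym v :: popSym v :: b) s t ↔ wordRel (a ++ b) s t := by
  rw [wordRel_append, wordRel_append]
  refine exists_congr fun m => and_congr_right fun _ => ?_
  show wordRel (pushSym v :: popSym v :: b) m t ↔ wordRel b m t
  constructor
  · rintro ⟨m1, h1, m2, h2, h⟩
    simp only [letterRel, pushSym, popSym] at h1 h2
    subst h1
    injection h2 with hv hm
    subst hm
    exact h
  · intro h
    exact ⟨v :: m, rfl, m, rfl, h⟩

lemma wordRel_split (a b : List (Alph V)) (v w : V) (s t : List V)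
    (h : wordRel (a ++ pushSym v :: popSym w :: b) s t) :
    w = v ∧ wordRel (a ++ b) s t := by
  rw [wordRel_append] at h
  obtain ⟨m, h1, m1, h2, m2, h3, h4⟩ := h
  simp only [letterRel, pushSym, popSym] at h2 h3
  subst h2
  injection h3 with hv hm
  subst hm
  exact ⟨hv.symm, (wordRel_append ..).mpr ⟨m, h1, h4⟩⟩

lemma pushPop_trans {L : Language (Alph V)} {y z : List (Alph V)}
    (h : PushPop L y) (h2 : PushPop {y} z) : PushPop L z := by
  induction h2 with
  | base hx => rwa [Set.mem_singleton_iff.mp hx]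
  | step _ ih => exact PushPop.step ih

lemma pushpop_wordRel {L : Language (Alph V)} {w : List (Alph V)} (h : PushPop L w) :
    ∃ x ∈ L, ∀ s t, wordRel x s t ↔ wordRel w s t := by
  induction h with
  | base hx => exact ⟨_, hx, fun _ _ => Iff.rfl⟩
  | step _ ih =>
    obtain ⟨x, hxL, hx⟩ := ih
    exact ⟨x, hxL, fun s t => (hx s t).trans (wordRel_cancel ..)⟩

lemma decomp (x : List (Alph V)) :
    (∃ p q : List V, x = p.map popSym ++ q.map pushSym) ∨
    (∃ (a : List (Alph V)) (v w : V) (b : List (Alph V)), x = a ++ pushSym v :: popSym w :: b) := by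
  induction x with
  | nil => exact Or.inl ⟨[], [], rfl⟩
  | cons c x ih =>
    rcases ih with ⟨p, q, rfl⟩ | ⟨a, v, w, b, rfl⟩
    · cases c with
      | inr u => exact Or.inl ⟨u :: p, q, rfl⟩
      | inl u =>
        cases p with
        | nil => exact Or.inl ⟨[], u :: q, rfl⟩
        | cons w p => exact Or.inr ⟨[], u, w, p.map popSym ++ q.map pushSym, rfl⟩
    · exact Or.inr ⟨c :: a, v, w, b, rfl⟩

lemma takePops_canon (p q : List V) :
    takePops (p.map popSym ++ q.map pushSym) = (p, q.map pushSym) := by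
  induction p with
  | nil =>
    cases q with
    | nil => rfl
    | cons w q => rfl
  | cons v p ih =>
    show takePops (Sum.inr v :: (p.map popSym ++ q.map pushSym)) = _
    rw [takePops, ih]

lemma canon_inj {p q p' q' : List V}
    (h : p.map popSym ++ q.map pushSym = p'.map popSym ++ q'.map pushSym) :
    p = p' ∧ q = q' := by
  have h2 := congrArg takePops h
  rw [takePops_canon, takePops_canon] at h2
  obtain ⟨h3, h4⟩ := Prod.ext_iff.mp h2
  refine ⟨h3, ?_⟩
  have : Function.Injective (pushSym (V := V)) := fun a b => Sum.inl.inj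
  exact List.map_injective_iff.mpr this h4

lemma reduce : ∀ (n : ℕ) (x : List (Alph V)) (s t : List V), x.length ≤ n → wordRel x s t →
    ∃ p q : List V, PushPop {x} (p.map popSym ++ q.map pushSym) ∧
      wordRel (p.map popSym ++ q.map pushSym) s t := by
  intro n
  induction n with
  | zero =>
    intro x s t hlen h
    rcases decomp x with ⟨p, q, rfl⟩ | ⟨a, v, w, b, rfl⟩
    · exact ⟨p, q, PushPop.base rfl, h⟩
    · simp [List.length_append] at hlen
  | succ n ih =>
    intro x s t hlen h
    rcases decomp x with ⟨p, q, rfl⟩ | ⟨a, v, w, b, rfl⟩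
    · exact ⟨p, q, PushPop.base rfl, h⟩
    · obtain ⟨rfl, h2⟩ := wordRel_split a b v w s t h
      have hl : (a ++ b).length ≤ n := by
        simp [List.length_append] at hlen ⊢; omega
      obtain ⟨p, q, hpp, hw⟩ := ih (a ++ b) s t hl h2
      refine ⟨p, q, pushPop_trans ?_ hpp, hw⟩
      exact PushPop.step (PushPop.base rfl)

lemma poppush_pad {L : Language (Alph V)} (u : List V) :
    ∀ p q : List V, PopPush L (p.map popSym ++ q.map pushSym) →
    PopPush L ((p ++ u).map popSym ++ (u.reverse ++ q).map pushSym) := by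
  induction u with
  | nil => intro p q h; simpa using h
  | cons v u ih =>
    intro p q h
    have h2 := PopPush.step (v := v) h
    have h3 := ih (p ++ [v]) (v :: q) (by simpa using h2)
    simpa [List.append_assoc] using h3

lemma overline_mem {L : Language (Alph V)} {w : List (Alph V)} (h : w ∈ overlineL L) :
    ∃ p q : List V, w = p.map popSym ++ q.map pushSym ∧ langRel L p q.reverse := by
  induction h with
  | base hx =>
    obtain ⟨hw, p, q, rfl⟩ := hx
    refine ⟨p, q, rfl, ?_⟩
    obtain ⟨x, hxL, hx⟩ := pushpop_wordRel hw
    refine ⟨x, hxL, (hx ..).mpr ?_⟩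
    rw [wordRel_canon]
    exact ⟨[], by simp, by simp⟩
  | @step p q v h ih =>
    obtain ⟨p', q', heq, hrel⟩ := ih
    obtain ⟨rfl, rfl⟩ := canon_inj heq
    refine ⟨p ++ [v], v :: q, by simp, ?_⟩
    obtain ⟨x, hxL, hx⟩ := hrel
    refine ⟨x, hxL, ?_⟩
    have := wordRel_suffix [v] hx
    simpa using this

lemma mem_overline {L : Language (Alph V)} {p q : List V} (h : langRel L p q.reverse) :
    p.map popSym ++ q.map pushSym ∈ overlineL L := by
  obtain ⟨x, hxL, hx⟩ := h
  obtain ⟨p', q', hpp, hw⟩ := reduce x.length x p q.reverse le_rfl hx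
  rw [wordRel_canon] at hw
  obtain ⟨u, rfl, hq⟩ := hw
  have hq' : q = u.reverse ++ q' := by
    have := congrArg List.reverse hq
    simpa using this
  subst hq'
  have hmem : (p'.map popSym ++ q'.map pushSym) ∈ filterL (pushpopCl L) :=
    ⟨pushPop_trans (PushPop.base hxL) hpp, p', q', rfl⟩
  exact poppush_pad u p' q' (PopPush.base hmem)

lemma join_relPow {L : Language (Alph V)} :
    ∀ (S : List (List (Alph V))) (s t : List V), (∀ y ∈ S, y ∈ L) → wordRel S.flatten s t →
      ∃ n, relPow (langRel L) n s t := by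
  intro S
  induction S with
  | nil => intro s t _ hx; exact ⟨0, hx⟩
  | cons y S ih =>
    intro s t hS hx
    rw [List.flatten_cons, wordRel_append] at hx
    obtain ⟨m, h1, h2⟩ := hx
    obtain ⟨n, hn⟩ := ih m t (fun z hz => hS z (List.mem_cons_of_mem _ hz)) h2
    exact ⟨n + 1, m, ⟨y, hS y (List.mem_cons_self (a := y) (l := S)), h1⟩, hn⟩

lemma relPow_join {L : Language (Alph V)} :
    ∀ (n : ℕ) (s t : List V), relPow (langRel L) n s t →
      ∃ x ∈ (KStar.kstar L : Language (Alph V)), wordRel x s t := by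
  intro n
  induction n with
  | zero =>
    intro s t h
    refine ⟨[], ?_, h⟩
    exact Language.mem_kstar.mpr ⟨[], rfl, by simp⟩
  | succ n ih =>
    intro s t h
    obtain ⟨m, ⟨x, hxL, hx⟩, h2⟩ := h
    obtain ⟨y, hyL, hy⟩ := ih m t h2
    obtain ⟨S, rfl, hS⟩ := Language.mem_kstar.mp hyL
    refine ⟨x ++ S.flatten, ?_, (wordRel_append ..).mpr ⟨m, hx, hy⟩⟩
    refine Language.mem_kstar.mpr ⟨x :: S, by simp, ?_⟩
    intro z hz
    rcases List.mem_cons.mp hz with rfl | hz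
    · exact hxL
    · exact hS z hz

lemma denote_eq (e : Exp V) : denote e = langRel (lang e) := by
  induction e with
  | zero =>
    funext s t
    apply propext
    constructor
    · intro h; exact h.elim
    · rintro ⟨x, hx, _⟩; exact hx.elim
  | one =>
    funext s t
    apply propext
    show s = t ↔ langRel 1 s t
    constructor
    · rintro rfl; exact ⟨[], (Language.mem_one _).mpr rfl, rfl⟩
    · rintro ⟨x, hx, hw⟩
      rw [Language.mem_one] at hx
      subst hx
      exact hw
  | plus e f ihe ihf =>
    funext s t
    apply propext
    show denote e s t ∨ denote f s t ↔ langRel (lang e + lang f) s t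
    rw [ihe, ihf]
    constructor
    · rintro (⟨x, hx, h⟩ | ⟨x, hx, h⟩)
      · exact ⟨x, (Language.mem_add _ _ _).mpr (Or.inl hx), h⟩
      · exact ⟨x, (Language.mem_add _ _ _).mpr (Or.inr hx), h⟩
    · rintro ⟨x, hx, h⟩
      rcases (Language.mem_add _ _ _).mp hx with hx | hx
      · exact Or.inl ⟨x, hx, h⟩
      · exact Or.inr ⟨x, hx, h⟩
  | seq e f ihe ihf =>
    funext s t
    apply propext
    show Relation.Comp (denote e) (denote f) s t ↔ langRel (lang e * lang f) s t
    rw [ihe, ihf]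
    constructor
    · rintro ⟨m, ⟨x, hx, h1⟩, ⟨y, hy, h2⟩⟩
      exact ⟨x ++ y, Language.mem_mul.mpr ⟨x, hx, y, hy, rfl⟩,
        (wordRel_append ..).mpr ⟨m, h1, h2⟩⟩
    · rintro ⟨z, hz, h⟩
      obtain ⟨x, hx, y, hy, rfl⟩ := Language.mem_mul.mp hz
      obtain ⟨m, h1, h2⟩ := (wordRel_append ..).mp h
      exact ⟨m, ⟨x, hx, h1⟩, ⟨y, hy, h2⟩⟩
  | star e ihe =>
    funext s t
    apply propext
    show (∃ n, relPow (denote e) n s t) ↔ langRel (KStar.kstar (lang e)) s t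
    rw [ihe]
    constructor
    · rintro ⟨n, h⟩
      exact relPow_join n s t h
    · rintro ⟨x, hx, h⟩
      obtain ⟨S, rfl, hS⟩ := Language.mem_kstar.mp hx
      exact join_relPow S s t hS h
  | push v =>
    funext s t
    apply propext
    show t = v :: s ↔ langRel {[pushSym v]} s t
    constructor
    · rintro rfl
      exact ⟨[pushSym v], rfl, v :: s, rfl, rfl⟩
    · rintro ⟨x, rfl, m, h1, h2⟩
      simp only [letterRel, pushSym] at h1
      cases h2
      exact h1
  | pop v =>
    funext s t
    apply propext
    show s = v :: t ↔ langRel {[popSym v]} s t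
    constructor
    · rintro rfl
      exact ⟨[popSym v], rfl, t, rfl, rfl⟩
    · rintro ⟨x, rfl, m, h1, h2⟩
      simp only [letterRel, popSym] at h1
      cases h2
      exact h1

end Lemmas

/-- For push-pop expressions `e` and `f`: `⟦e⟧ = ⟦f⟧` iff
`overline(L(e)) = overline(L(f))`. -/
theorem stmt13 {V : Type} [Fintype V] [Nonempty V] (e f : Exp V) :
    denote e = denote f ↔ overlineL (lang e) = overlineL (lang f) := by
  have key : ∀ (L L' : Language (Alph V)), overlineL L = overlineL L' →
      ∀ s t, langRel L s t → langRel L' s t := by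
    rintro L L' hLL s t ⟨x, hxL, hx⟩
    obtain ⟨p', q', hpp, hw⟩ := reduce x.length x s t le_rfl hx
    rw [wordRel_canon] at hw
    obtain ⟨u, rfl, rfl⟩ := hw
    have hmem : (p'.map popSym ++ q'.map pushSym) ∈ overlineL L :=
      PopPush.base ⟨pushPop_trans (PushPop.base hxL) hpp, p', q', rfl⟩
    rw [hLL] at hmem
    obtain ⟨p'', q'', heq, y, hyL, hy⟩ := overline_mem hmem
    obtain ⟨rfl, rfl⟩ := canon_inj heq
    exact ⟨y, hyL, wordRel_suffix u hy⟩
  constructor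
  · intro h
    have hrel : langRel (lang e) = langRel (lang f) := by
      rw [← denote_eq, ← denote_eq, h]
    ext w
    constructor
    · intro hw
      obtain ⟨p, q, rfl, hr⟩ := overline_mem hw
      rw [hrel] at hr
      exact mem_overline hr
    · intro hw
      obtain ⟨p, q, rfl, hr⟩ := overline_mem hw
      rw [← hrel] at hr
      exact mem_overline hr
  · intro h
    rw [denote_eq, denote_eq]
    funext s t
    exact propext ⟨key _ _ h s t, key _ _ h.symm s t⟩
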